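/- Let A be a finite index set with design matrix X_A ∈ ℝ^{n×|A|}, α > 0, q, b ∈ ℝⁿ, λ ∈ ℝ, and s ∈ ℝ^{|A|}. Suppose β, β′ ∈ ℝ^{|A|} and τ_t, τ_{t+1} ∈ ℝ satisfy −X_Aᵀ((q + τ_t b) − X_A β) + α β + λ s = 0 and −X_Aᵀ((q + τ_{t+1} b) − X_A β′) + α β′ + λ s = 0 (same active set and same sign vector s). Then β′ − β = (X_Aᵀ X_A + α I_{|A|})⁻¹ X_Aᵀ b · (τ_{t+1} − τ_t); in particular the elastic-net solution along the τ-path is piecewise linear in τ with direction ν_A(τ) = (X_Aᵀ X_A + α I_{|A|})⁻¹ X_Aᵀ b. -/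

import Mathlib

open Matrix

lemma posDef_smul_one {a : ℕ} {α : ℝ} (hα : 0 < α) :
    (α • (1 : Matrix (Fin a) (Fin a) ℝ)).PosDef := by
  refine Matrix.PosDef.of_dotProduct_mulVec_pos ?_ (fun x hx => ?_)
  · unfold Matrix.IsHermitian
    simp [Matrix.conjTranspose_smul, Matrix.conjTranspose_one]
  · have h1 : (α • (1 : Matrix (Fin a) (Fin a) ℝ)) *ᵥ x = α • x := by
      simp [Matrix.smul_mulVec]
    rw [h1]
    have hxx : 0 < dotProduct x x := by
      have := Matrix.dotProduct_star_self_pos_iff (v := x)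
      simpa [star_trivial] using this.mpr hx
    have h2 : dotProduct (star x) (α • x) = α * dotProduct x x := by
      simp [dotProduct_smul, star_trivial, smul_eq_mul]
    rw [h2]
    positivity

/-- In the elastic-net τ-path with parametrized response y(τ) = q + τ b, if the KKT
stationarity condition holds on the active set with the same sign vector at two
parameter values, the solution moves linearly in τ with direction
ν_A = (X_Aᵀ X_A + α I)⁻¹ X_Aᵀ b. -/
theorem elastic_net_tau_path_piecewise_linear
    (n a : ℕ) (X : Matrix (Fin n) (Fin a) ℝ) (α : ℝ) (hα : 0 < α)
    (q b : Fin n → ℝ) (lam : ℝ) (s : Fin a → ℝ)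
    (β β' : Fin a → ℝ) (τt τt1 : ℝ)
    (h : -(Xᵀ.mulVec ((q + τt • b) - X.mulVec β)) + α • β + lam • s = 0)
    (h' : -(Xᵀ.mulVec ((q + τt1 • b) - X.mulVec β')) + α • β' + lam • s = 0) :
    β' - β =
      (τt1 - τt) •
        ((Xᵀ * X + α • (1 : Matrix (Fin a) (Fin a) ℝ))⁻¹.mulVec (Xᵀ.mulVec b)) := by
  set M : Matrix (Fin a) (Fin a) ℝ := Xᵀ * X + α • (1 : Matrix (Fin a) (Fin a) ℝ) with hM
  have hMpd : M.PosDef := by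
    refine Matrix.PosDef.posSemidef_add ?_ (posDef_smul_one hα)
    have := Matrix.posSemidef_conjTranspose_mul_self X
    rwa [Matrix.conjTranspose_eq_transpose_of_trivial] at this
  have hMinv : IsUnit M := hMpd.isUnit
  have key : M.mulVec (β' - β) = (τt1 - τt) • (Xᵀ.mulVec b) := by
    have hd := congrArg₂ (· - ·) h' h
    simp only [sub_zero] at hd
    have expand : ∀ (τ : ℝ) (β : Fin a → ℝ),
        -(Xᵀ.mulVec ((q + τ • b) - X.mulVec β)) + α • β + lam • s
          = -(Xᵀ.mulVec q) - τ • Xᵀ.mulVec b + (Xᵀ * X).mulVec β + α • β + lam • s := by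
      intro τ β
      simp [Matrix.mulVec_add, Matrix.mulVec_sub, Matrix.mulVec_smul, ← Matrix.mulVec_mulVec]
      abel
    rw [expand, expand] at hd
    have : (Xᵀ * X).mulVec (β' - β) + α • (β' - β) = (τt1 - τt) • Xᵀ.mulVec b := by
      have := hd
      rw [Matrix.mulVec_sub, sub_smul, smul_sub]
      abel_nf
      abel_nf at this
      linear_combination (norm := module) this
    rw [hM, Matrix.add_mulVec, Matrix.smul_mulVec, Matrix.one_mulVec]
    exact this
  have := congrArg (M⁻¹.mulVec ·) key
  simp only [Matrix.mulVec_mulVec] at this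
  rw [Matrix.mulVec_smul] at this
  rwa [Matrix.nonsing_inv_mul _ (Matrix.isUnit_iff_isUnit_det _ |>.1 hMinv), Matrix.one_mulVec] at this
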